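/- Let E be a real normed vector space, let ε₁, ε₂ > 0, let c₁, c₂ ∈ E, and let P₁ and P₂ be subsets of E with P₁ contained in the open ball of radius ε₁ about c₁ and P₂ contained in the open ball of radius ε₂ about c₂. Suppose there exists a point x ∈ P₁ ∩ P₂. Then there exists a point y on the segment joining c₁ and c₂ such that ‖c₁ − y‖ < ε₂ and ‖c₂ − y‖ < ε₁; consequently P₁ ∪ P₂ is contained in the open ball of radius ε₁ + ε₂ about y. -/

import Mathlib

/-- **Two overlapping balls.** If `P₁` lies in the open ball of radius `ε₁` about `c₁`,
`P₂` lies in the open ball of radius `ε₂` about `c₂`, and `P₁` and `P₂` share a point `x`,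
then there is a point `y` on the segment joining `c₁` and `c₂` with `‖c₁ - y‖ < ε₂` and
`‖c₂ - y‖ < ε₁`, and consequently `P₁ ∪ P₂` lies in the open ball of radius `ε₁ + ε₂`
about `y`. -/
theorem two_overlapping_balls {E : Type*} [NormedAddCommGroup E] [NormedSpace ℝ E]
    (ε₁ ε₂ : ℝ) (hε₁ : 0 < ε₁) (hε₂ : 0 < ε₂) (c₁ c₂ : E) (P₁ P₂ : Set E)
    (hP₁ : P₁ ⊆ Metric.ball c₁ ε₁) (hP₂ : P₂ ⊆ Metric.ball c₂ ε₂)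
    (x : E) (hx₁ : x ∈ P₁) (hx₂ : x ∈ P₂) :
    ∃ y ∈ segment ℝ c₁ c₂, ‖c₁ - y‖ < ε₂ ∧ ‖c₂ - y‖ < ε₁ ∧
      P₁ ∪ P₂ ⊆ Metric.ball y (ε₁ + ε₂) := by
  have ha : ‖x - c₁‖ < ε₁ := by
    have := hP₁ hx₁; rw [Metric.mem_ball, dist_eq_norm] at this; exact this
  have hb : ‖x - c₂‖ < ε₂ := by
    have := hP₂ hx₂; rw [Metric.mem_ball, dist_eq_norm] at this; exact this
  set a := ‖x - c₁‖ with hadef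
  set b := ‖x - c₂‖ with hbdef
  have ha0 : 0 ≤ a := norm_nonneg _
  have hb0 : 0 ≤ b := norm_nonneg _
  have hd : ‖c₁ - c₂‖ ≤ a + b := by
    calc ‖c₁ - c₂‖ = ‖(x - c₂) - (x - c₁)‖ := by congr 1; abel
      _ ≤ ‖x - c₂‖ + ‖x - c₁‖ := norm_sub_le _ _
      _ = a + b := by ring
  -- choose y
  rcases eq_or_lt_of_le (add_nonneg ha0 hb0) with hab | hab
  · -- a + b = 0, so c₁ = c₂
    have hd0 : ‖c₁ - c₂‖ = 0 := le_antisymm (by rw [← hab] at hd; exact hd) (norm_nonneg _)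
    refine ⟨c₁, left_mem_segment ℝ c₁ c₂, by simpa using hε₂, by
      rw [show c₂ - c₁ = -(c₁ - c₂) by abel, norm_neg, hd0]; exact hε₁, ?_⟩
    intro p hp
    rcases hp with hp | hp
    · have := hP₁ hp
      exact Metric.ball_subset_ball (by linarith) this
    · have := hP₂ hp
      have h12 : c₂ = c₁ := by
        have := sub_eq_zero.mp (norm_eq_zero.mp hd0); exact this.symm
      rw [h12] at this
      exact Metric.ball_subset_ball (by linarith) this
  · set t : ℝ := b / (a + b) with htdef
    have ht0 : 0 ≤ t := div_nonneg hb0 hab.le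
    have ht1 : t ≤ 1 := by
      rw [htdef, div_le_one hab]; linarith
    set y : E := (1 - t) • c₁ + t • c₂ with hydef
    have hyseg : y ∈ segment ℝ c₁ c₂ := ⟨1 - t, t, by linarith, ht0, by ring, rfl⟩
    have h1 : c₁ - y = t • (c₁ - c₂) := by rw [hydef]; module
    have h2 : c₂ - y = (1 - t) • (c₂ - c₁) := by rw [hydef]; module
    have hc1 : ‖c₁ - y‖ < ε₂ := by
      rw [h1, norm_smul, Real.norm_eq_abs, abs_of_nonneg ht0]
      calc t * ‖c₁ - c₂‖ ≤ t * (a + b) := mul_le_mul_of_nonneg_left hd ht0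
        _ = b := div_mul_cancel₀ b (ne_of_gt hab)
        _ < ε₂ := hb
    have hc2 : ‖c₂ - y‖ < ε₁ := by
      rw [h2, norm_smul, Real.norm_eq_abs, abs_of_nonneg (by linarith)]
      have h21 : ‖c₂ - c₁‖ = ‖c₁ - c₂‖ := by rw [show c₂ - c₁ = -(c₁ - c₂) by abel, norm_neg]
      rw [h21]
      calc (1 - t) * ‖c₁ - c₂‖ ≤ (1 - t) * (a + b) :=
            mul_le_mul_of_nonneg_left hd (by linarith)
        _ = a := by rw [htdef]; field_simp; ring
        _ < ε₁ := ha
    refine ⟨y, hyseg, hc1, hc2, ?_⟩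
    intro p hp
    rw [Metric.mem_ball, dist_eq_norm]
    rcases hp with hp | hp
    · have hpc : ‖p - c₁‖ < ε₁ := by
        have := hP₁ hp; rwa [Metric.mem_ball, dist_eq_norm] at this
      calc ‖p - y‖ = ‖(p - c₁) + (c₁ - y)‖ := by congr 1; abel
        _ ≤ ‖p - c₁‖ + ‖c₁ - y‖ := norm_add_le _ _
        _ < ε₁ + ε₂ := by linarith
    · have hpc : ‖p - c₂‖ < ε₂ := by
        have := hP₂ hp; rwa [Metric.mem_ball, dist_eq_norm] at this
      calc ‖p - y‖ = ‖(p - c₂) + (c₂ - y)‖ := by congr 1; abel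
        _ ≤ ‖p - c₂‖ + ‖c₂ - y‖ := norm_add_le _ _
        _ < ε₁ + ε₂ := by linarith
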